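/- For all a > 0 and all λ > 0, the integral over (0,∞) of e^{−λx} · (1/(4√π)) x^{−5/2} e^{−a²/(4x)} (a² + 2x) dx equals √λ e^{−a√λ} + (2/a) e^{−a√λ}. In particular, ∫₀^∞ e^{−λx} |h_a(x)| dx ≤ √λ e^{−a√λ} + (2/a) e^{−a√λ}, where h_a(x) = (1/(4√π)) x^{−5/2} e^{−a²/(4x)} (a² − 2x). -/

import Mathlib

open Real MeasureTheory Set Filter intervalIntegral Topology



noncomputable def Efn (t : ℝ) : ℝ := ∫ s in (0:ℝ)..t, Real.exp (-s^2)

lemma gauss_cont : Continuous fun s : ℝ => Real.exp (-s^2) := by fun_prop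

lemma gauss_int : MeasureTheory.Integrable fun s : ℝ => Real.exp (-s^2) := by
  have := integrable_exp_neg_mul_sq (b := 1) one_pos
  simpa using this

lemma Efn_hasDerivAt (t : ℝ) : HasDerivAt Efn (Real.exp (-t^2)) t :=
  intervalIntegral.integral_hasDerivAt_right (gauss_cont.intervalIntegrable _ _)
    (gauss_cont.stronglyMeasurable.stronglyMeasurableAtFilter)
    gauss_cont.continuousAt

lemma gauss_Ioi : ∫ s in Ioi (0:ℝ), Real.exp (-s^2) = Real.sqrt π / 2 := by
  have := integral_gaussian_Ioi 1
  simpa using this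

lemma Efn_atTop : Tendsto Efn atTop (𝓝 (Real.sqrt π / 2)) := by
  rw [← gauss_Ioi]
  exact intervalIntegral_tendsto_integral_Ioi 0 gauss_int.integrableOn tendsto_id

lemma gauss_Iic : ∫ s in Iic (0:ℝ), Real.exp (-s^2) = Real.sqrt π / 2 := by
  have h := integral_comp_neg_Iic (0:ℝ) (fun s => Real.exp (-s^2))
  simp only [neg_zero, neg_sq] at h
  rw [h, ← MeasureTheory.integral_Ici_eq_integral_Ioi, MeasureTheory.integral_Ici_eq_integral_Ioi, gauss_Ioi]

lemma Efn_atBot : Tendsto Efn atBot (𝓝 (-(Real.sqrt π / 2))) := by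
  have h : Tendsto (fun t => ∫ s in t..(0:ℝ), Real.exp (-s^2)) atBot (𝓝 (Real.sqrt π / 2)) := by
    rw [← gauss_Iic]
    exact intervalIntegral_tendsto_integral_Iic 0 gauss_int.integrableOn tendsto_id
  have h2 : ∀ t, Efn t = -∫ s in t..(0:ℝ), Real.exp (-s^2) := by
    intro t
    rw [Efn, intervalIntegral.integral_symm]
  have := h.neg
  refine this.congr fun t => (h2 t).symm



section
variable (a l : ℝ)
noncomputable def sl := Real.sqrt l
noncomputable def Au : ℝ := Real.exp (-(a * sl l)) * (sl l + 2/a) / Real.sqrt π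
noncomputable def Bv : ℝ := Real.exp (a * sl l) * (sl l - 2/a) / Real.sqrt π
noncomputable def uf (x : ℝ) : ℝ := sl l * Real.sqrt x - a/(2*Real.sqrt x)
noncomputable def vf (x : ℝ) : ℝ := sl l * Real.sqrt x + a/(2*Real.sqrt x)
noncomputable def body (x : ℝ) : ℝ :=
  (1/Real.sqrt π) / Real.sqrt x * Real.exp (-(l*x) - a^2/(4*x))
    + Au a l * Efn (uf a l x) + Bv a l * Efn (vf a l x)
end

lemma sqrtTop : Tendsto Real.sqrt atTop atTop := by
  apply tendsto_atTop_atTop.2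
  intro b
  refine ⟨max (b^2) 0, fun x hx => ?_⟩
  rcases le_total b 0 with hb | hb
  · exact hb.trans (Real.sqrt_nonneg x)
  · have : b^2 ≤ x := le_trans (le_max_left _ _) hx
    calc b = Real.sqrt (b^2) := by rw [Real.sqrt_sq hb]
      _ ≤ Real.sqrt x := Real.sqrt_le_sqrt this

lemma sl_pos {l : ℝ} (hl : 0 < l) : 0 < sl l := Real.sqrt_pos.2 hl

lemma uf_atTop (a l : ℝ) (ha : 0 < a) (hl : 0 < l) : Tendsto (uf a l) atTop atTop := by
  have h0 : Tendsto (fun x : ℝ => sl l * Real.sqrt x - a/2) atTop atTop :=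
    tendsto_atTop_add_const_right _ _ ((tendsto_const_mul_atTop_of_pos (sl_pos hl)).2
      sqrtTop)
  refine tendsto_atTop_mono' _ ?_ h0
  filter_upwards [eventually_ge_atTop (1:ℝ)] with x hx
  have hsx : (1:ℝ) ≤ Real.sqrt x := by
    rw [show (1:ℝ) = Real.sqrt 1 by simp]; exact Real.sqrt_le_sqrt hx
  have : a/(2*Real.sqrt x) ≤ a/2 := by
    apply div_le_div_of_nonneg_left ha.le two_pos
    nlinarith
  simp only [uf]
  linarith

lemma vf_atTop (a l : ℝ) (ha : 0 < a) (hl : 0 < l) : Tendsto (vf a l) atTop atTop := by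
  have h0 : Tendsto (fun x : ℝ => sl l * Real.sqrt x) atTop atTop :=
    (tendsto_const_mul_atTop_of_pos (sl_pos hl)).2 sqrtTop
  refine tendsto_atTop_mono' _ ?_ h0
  filter_upwards [eventually_ge_atTop (0:ℝ)] with x hx
  have : 0 ≤ a/(2*Real.sqrt x) := by positivity
  simp only [vf]
  linarith

lemma sqrt_nhdsGT : Tendsto Real.sqrt (𝓝[>] (0:ℝ)) (𝓝[>] 0) := by
  apply tendsto_nhdsWithin_of_tendsto_nhds_of_eventually_within
  · have := (Real.continuous_sqrt.tendsto 0)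
    simpa using this.mono_left nhdsWithin_le_nhds
  · filter_upwards [self_mem_nhdsWithin] with x (hx : 0 < x)
    exact Real.sqrt_pos.2 hx

lemma inv_sqrt_atTop : Tendsto (fun x : ℝ => (Real.sqrt x)⁻¹) (𝓝[>] (0:ℝ)) atTop :=
  tendsto_inv_nhdsGT_zero.comp sqrt_nhdsGT

lemma div_sqrt_atTop (a : ℝ) (ha : 0 < a) :
    Tendsto (fun x : ℝ => a/(2*Real.sqrt x)) (𝓝[>] (0:ℝ)) atTop := by
  have := (tendsto_const_mul_atTop_of_pos (show (0:ℝ) < a/2 by positivity)).2 inv_sqrt_atTop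
  refine this.congr fun x => ?_
  field_simp

lemma uf_atBot (a l : ℝ) (ha : 0 < a) (hl : 0 < l) : Tendsto (uf a l) (𝓝[>] (0:ℝ)) atBot := by
  have h0 : Tendsto (fun x : ℝ => sl l + -(a/(2*Real.sqrt x))) (𝓝[>] (0:ℝ)) atBot := by
    apply tendsto_atBot_add_const_left
    exact tendsto_neg_atTop_atBot.comp (div_sqrt_atTop a ha)
  refine tendsto_atBot_mono' _ ?_ h0
  filter_upwards [Ioo_mem_nhdsGT_of_mem (by simp : (0:ℝ) ∈ Ico 0 1)] with x hx
  have hx1 : Real.sqrt x ≤ 1 := by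
    rw [show (1:ℝ) = Real.sqrt 1 by simp]; exact Real.sqrt_le_sqrt hx.2.le
  have : sl l * Real.sqrt x ≤ sl l := by nlinarith [sl_pos hl, Real.sqrt_nonneg x]
  simp only [uf]
  nlinarith []

lemma vf_atBot (a l : ℝ) (ha : 0 < a) (hl : 0 < l) : Tendsto (vf a l) (𝓝[>] (0:ℝ)) atTop := by
  refine tendsto_atTop_mono' _ ?_ (div_sqrt_atTop a ha)
  filter_upwards [self_mem_nhdsWithin] with x (hx : 0 < x)
  have : 0 ≤ sl l * Real.sqrt x := mul_nonneg (sl_pos hl).le (Real.sqrt_nonneg x)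
  simp only [vf]
  linarith

lemma term1_atTop (a l : ℝ) (ha : 0 < a) (hl : 0 < l) :
    Tendsto (fun x => (1/Real.sqrt π) / Real.sqrt x * Real.exp (-(l*x) - a^2/(4*x)))
      atTop (𝓝 0) := by
  apply squeeze_zero' (g := fun x => (1/Real.sqrt π) / Real.sqrt x)
  · filter_upwards [eventually_gt_atTop (0:ℝ)] with x hx
    positivity
  · filter_upwards [eventually_gt_atTop (0:ℝ)] with x hx
    have h1 : Real.exp (-(l*x) - a^2/(4*x)) ≤ 1 := by
      rw [Real.exp_le_one_iff]
      have : 0 ≤ a^2/(4*x) := by positivity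
      nlinarith
    have h2 : 0 ≤ (1/Real.sqrt π) / Real.sqrt x := by positivity
    calc (1/Real.sqrt π) / Real.sqrt x * Real.exp (-(l*x) - a^2/(4*x))
        ≤ (1/Real.sqrt π) / Real.sqrt x * 1 := by
          exact mul_le_mul_of_nonneg_left h1 h2
      _ = (1/Real.sqrt π) / Real.sqrt x := by ring
  · have := sqrtTop.inv_tendsto_atTop
    have h2 := this.const_mul (1/Real.sqrt π)
    simpa [div_eq_mul_inv] using h2

lemma term1_at0 (a l : ℝ) (ha : 0 < a) (hl : 0 < l) :
    Tendsto (fun x => (1/Real.sqrt π) / Real.sqrt x * Real.exp (-(l*x) - a^2/(4*x)))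
      (𝓝[>] (0:ℝ)) (𝓝 0) := by
  apply squeeze_zero' (g := fun x => 4/(a^2*Real.sqrt π) * Real.sqrt x)
  · filter_upwards [self_mem_nhdsWithin] with x (hx : 0 < x)
    positivity
  · filter_upwards [self_mem_nhdsWithin] with x (hx : 0 < x)
    have hy : 0 < a^2/(4*x) := by positivity
    have hexp : Real.exp (-(l*x) - a^2/(4*x)) ≤ 4*x/a^2 := by
      have h1 : Real.exp (-(l*x) - a^2/(4*x)) ≤ Real.exp (-(a^2/(4*x))) := by
        apply Real.exp_le_exp.2
        nlinarith [mul_pos hl hx]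
      have h2 : Real.exp (-(a^2/(4*x))) ≤ (a^2/(4*x))⁻¹ := by
        rw [Real.exp_neg]
        exact inv_anti₀ hy (Real.add_one_le_exp _ |>.trans' (by linarith))
      have h3 : (a^2/(4*x))⁻¹ = 4*x/a^2 := by field_simp
      linarith [h1.trans (h2.trans_eq h3)]
    have hsx : 0 < Real.sqrt x := Real.sqrt_pos.2 hx
    have hxs : x / Real.sqrt x = Real.sqrt x := by
      rw [eq_comm, eq_div_iff hsx.ne', Real.mul_self_sqrt hx.le]
    calc (1/Real.sqrt π) / Real.sqrt x * Real.exp (-(l*x) - a^2/(4*x))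
        ≤ (1/Real.sqrt π) / Real.sqrt x * (4*x/a^2) := by
          apply mul_le_mul_of_nonneg_left hexp (by positivity)
      _ = 4/(a^2*Real.sqrt π) * Real.sqrt x := by
          have hxx : Real.sqrt x * Real.sqrt x = x := Real.mul_self_sqrt hx.le
          have hpi : (0:ℝ) < Real.sqrt π := Real.sqrt_pos.2 Real.pi_pos
          field_simp
          linear_combination (-1) * hxx
  · have : Tendsto Real.sqrt (𝓝[>] (0:ℝ)) (𝓝 0) := by
      have := (Real.continuous_sqrt.tendsto 0)
      simpa using this.mono_left nhdsWithin_le_nhds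
    simpa using this.const_mul (4/(a^2*Real.sqrt π))

lemma body_atTop (a l : ℝ) (ha : 0 < a) (hl : 0 < l) :
    Tendsto (body a l) atTop (𝓝 (Au a l * (Real.sqrt π/2) + Bv a l * (Real.sqrt π/2))) := by
  have h := ((term1_atTop a l ha hl).add
      (((Efn_atTop.comp (uf_atTop a l ha hl)).const_mul (Au a l)).add
        ((Efn_atTop.comp (vf_atTop a l ha hl)).const_mul (Bv a l))))
  have : (0 : ℝ) + (Au a l * (Real.sqrt π/2) + Bv a l * (Real.sqrt π/2))
      = Au a l * (Real.sqrt π/2) + Bv a l * (Real.sqrt π/2) := by ring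
  rw [← this]
  exact h.congr fun x => by simp only [body, Function.comp]; ring

lemma body_at0 (a l : ℝ) (ha : 0 < a) (hl : 0 < l) :
    Tendsto (body a l) (𝓝[>] (0:ℝ))
      (𝓝 (Au a l * (-(Real.sqrt π/2)) + Bv a l * (Real.sqrt π/2))) := by
  have h := ((term1_at0 a l ha hl).add
      (((Efn_atBot.comp (uf_atBot a l ha hl)).const_mul (Au a l)).add
        ((Efn_atTop.comp (vf_atBot a l ha hl)).const_mul (Bv a l))))
  have : (0 : ℝ) + (Au a l * (-(Real.sqrt π/2)) + Bv a l * (Real.sqrt π/2))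
      = Au a l * (-(Real.sqrt π/2)) + Bv a l * (Real.sqrt π/2) := by ring
  rw [← this]
  exact h.congr fun x => by simp only [body, Function.comp]; ring





lemma body_deriv (a l : ℝ) (ha : 0 < a) (hl : 0 < l) {x : ℝ} (hx : 0 < x) :
    HasDerivAt (body a l)
      (Real.exp (-l * x) *
        (1 / (4 * Real.sqrt Real.pi) * x ^ (-(5 : ℝ) / 2) * Real.exp (-a ^ 2 / (4 * x)) *
          (a ^ 2 + 2 * x))) x := by
  have hs : 0 < Real.sqrt x := Real.sqrt_pos.2 hx
  set s := Real.sqrt x with hsdef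
  have hs2 : s ^ 2 = x := Real.sq_sqrt hx.le
  have hl2 : sl l ^ 2 = l := Real.sq_sqrt hl.le
  have hsd : HasDerivAt Real.sqrt (1/(2*s)) x := Real.hasDerivAt_sqrt hx.ne'
  -- derivative of 1/sqrt
  have h1 : HasDerivAt (fun x => (1/Real.sqrt π) / Real.sqrt x) (-(1/Real.sqrt π) * (1/(2*s)) / s^2) x := by
    have := (hasDerivAt_const x (1/Real.sqrt π)).div hsd hs.ne'
    refine this.congr_deriv ?_
    rw [← hsdef]
    ring
  -- derivative of the exponent
  have h2 : HasDerivAt (fun x => -(l*x) - a^2/(4*x)) (-l + a^2/(4*x^2)) x := by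
    have hA : HasDerivAt (fun x : ℝ => -(l*x)) (-l) x := by
      exact (((hasDerivAt_id x).const_mul l).neg).congr_deriv (by ring)
    have hB : HasDerivAt (fun x : ℝ => a^2/(4*x)) (-(a^2*4)/(4*x)^2) x := by
      have := (hasDerivAt_const x (a^2)).div ((hasDerivAt_id x).const_mul 4) (by positivity)
      refine this.congr_deriv ?_
      simp only [id_eq]
      ring
    refine (hA.sub hB).congr_deriv ?_
    field_simp
    ring
  have h3 : HasDerivAt (fun x => Real.exp (-(l*x) - a^2/(4*x)))
      (Real.exp (-(l*x) - a^2/(4*x)) * (-l + a^2/(4*x^2))) x := h2.exp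
  have hterm1 : HasDerivAt (fun x => (1/Real.sqrt π) / Real.sqrt x * Real.exp (-(l*x) - a^2/(4*x)))
      ((-(1/Real.sqrt π) * (1/(2*s)) / s^2) * Real.exp (-(l*x) - a^2/(4*x))
        + (1/Real.sqrt π) / s * (Real.exp (-(l*x) - a^2/(4*x)) * (-l + a^2/(4*x^2)))) x :=
    h1.mul h3
  -- derivatives of u and v
  have hu : HasDerivAt (uf a l) (sl l * (1/(2*s)) + (a * (2 * (1/(2*s))))/(2*s)^2) x := by
    have hden : HasDerivAt (fun x => 2 * Real.sqrt x) (2 * (1/(2*s))) x := hsd.const_mul 2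
    have h := ((hsd.const_mul (sl l)).sub ((hasDerivAt_const x a).div hden (by positivity)))
    refine h.congr_deriv ?_
    rw [← hsdef]
    ring
  have hv : HasDerivAt (vf a l) (sl l * (1/(2*s)) - (a * (2 * (1/(2*s))))/(2*s)^2) x := by
    have hden : HasDerivAt (fun x => 2 * Real.sqrt x) (2 * (1/(2*s))) x := hsd.const_mul 2
    have h := ((hsd.const_mul (sl l)).add ((hasDerivAt_const x a).div hden (by positivity)))
    refine h.congr_deriv ?_
    rw [← hsdef]
    ring
  have hEu : HasDerivAt (fun x => Efn (uf a l x))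
      (Real.exp (-(uf a l x)^2) * (sl l * (1/(2*s)) + (a * (2 * (1/(2*s))))/(2*s)^2)) x :=
    (Efn_hasDerivAt (uf a l x)).comp x hu
  have hEv : HasDerivAt (fun x => Efn (vf a l x))
      (Real.exp (-(vf a l x)^2) * (sl l * (1/(2*s)) - (a * (2 * (1/(2*s))))/(2*s)^2)) x :=
    (Efn_hasDerivAt (vf a l x)).comp x hv
  have hbig := (hterm1.add ((hEu.const_mul (Au a l)))).add ((hEv.const_mul (Bv a l)))
  -- exp identities
  have hee : Real.exp (a * sl l) * Real.exp (-(a * sl l)) = 1 := by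
    rw [← Real.exp_add]; simp
  have hexpu : Real.exp (-(uf a l x)^2)
      = Real.exp (a * sl l) * Real.exp (-(l*x) - a^2/(4*x)) := by
    rw [← Real.exp_add]
    congr 1
    rw [uf]
    rw [← hsdef]
    field_simp
    linear_combination (4*a^2 - 16*x*s^2*(sl l)^2) * hs2 - 16*x^2*s^2 * hl2
  have hexpv : Real.exp (-(vf a l x)^2)
      = Real.exp (-(a * sl l)) * Real.exp (-(l*x) - a^2/(4*x)) := by
    rw [← Real.exp_add]
    congr 1
    rw [vf, ← hsdef]
    field_simp
    linear_combination (4*a^2 - 16*x*s^2*(sl l)^2) * hs2 - 16*x^2*s^2 * hl2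
  have hx52 : x ^ (-(5 : ℝ) / 2) = (s^5)⁻¹ := by
    rw [← hs2, ← Real.rpow_natCast s 2, ← Real.rpow_mul hs.le, ← Real.rpow_neg_one (s^5)]
    rw [← Real.rpow_natCast (s) 5, ← Real.rpow_mul hs.le]
    norm_num
  have hexpsplit : Real.exp (-(l*x) - a^2/(4*x)) = Real.exp (-l * x) * Real.exp (-a^2/(4*x)) := by
    rw [← Real.exp_add]; ring_nf
  have hpi : Real.sqrt π ≠ 0 := by positivity
  have hfun : body a l = fun x => (1/Real.sqrt π) / Real.sqrt x * Real.exp (-(l*x) - a^2/(4*x))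
      + Au a l * Efn (uf a l x) + Bv a l * Efn (vf a l x) := rfl
  rw [hfun]
  refine hbig.congr_deriv ?_
  symm
  rw [hexpu, hexpv, Au, Bv, hx52, hexpsplit, Real.exp_neg (a * sl l)]
  set L := sl l with hLdef
  rw [← hl2, ← hs2]
  have hP : Real.exp (a * L) ≠ 0 := Real.exp_ne_zero _
  field_simp
  ring


/-- For `a > 0` and `λ > 0`, the integral of
`e^{-λx} (1/(4√π)) x^{-5/2} e^{-a²/(4x)} (a² + 2x)` over `(0,∞)` equals
`√λ e^{-a√λ} + (2/a) e^{-a√λ}`; in particular `x ↦ e^{-λx} |h_a(x)|` is integrable on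
`(0,∞)` and its integral is bounded by the same quantity, where
`h_a(x) = (1/(4√π)) x^{-5/2} e^{-a²/(4x)} (a² - 2x)`. -/
theorem laplace_abs_ha_bound (a l : ℝ) (ha : 0 < a) (hl : 0 < l) :
    (∫ x in Set.Ioi (0 : ℝ),
      Real.exp (-l * x) *
        (1 / (4 * Real.sqrt Real.pi) * x ^ (-(5 : ℝ) / 2) * Real.exp (-a ^ 2 / (4 * x)) *
          (a ^ 2 + 2 * x))
      = Real.sqrt l * Real.exp (-a * Real.sqrt l) + (2 / a) * Real.exp (-a * Real.sqrt l)) ∧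
    MeasureTheory.IntegrableOn
      (fun x : ℝ => Real.exp (-l * x) *
        |1 / (4 * Real.sqrt Real.pi) * x ^ (-(5 : ℝ) / 2) * Real.exp (-a ^ 2 / (4 * x)) *
          (a ^ 2 - 2 * x)|) (Set.Ioi (0 : ℝ)) ∧
    (∫ x in Set.Ioi (0 : ℝ),
      Real.exp (-l * x) *
        |1 / (4 * Real.sqrt Real.pi) * x ^ (-(5 : ℝ) / 2) * Real.exp (-a ^ 2 / (4 * x)) *
          (a ^ 2 - 2 * x)|
      ≤ Real.sqrt l * Real.exp (-a * Real.sqrt l) + (2 / a) * Real.exp (-a * Real.sqrt l)) := by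
  set g : ℝ → ℝ := fun x => Real.exp (-l * x) *
      (1 / (4 * Real.sqrt Real.pi) * x ^ (-(5 : ℝ) / 2) * Real.exp (-a ^ 2 / (4 * x)) *
        (a ^ 2 + 2 * x)) with hgdef
  set c0 : ℝ := Au a l * (-(Real.sqrt π/2)) + Bv a l * (Real.sqrt π/2) with hc0
  set F : ℝ → ℝ := fun x => if x ≤ 0 then c0 else body a l x with hFdef
  have hF0 : F 0 = c0 := if_pos le_rfl
  have hFbody : ∀ᶠ x in 𝓝[>] (0:ℝ), body a l x = F x := by
    filter_upwards [self_mem_nhdsWithin] with x (hx : 0 < x)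
    simp [hFdef, not_le.2 hx]
  have hcont : ContinuousWithinAt F (Ici (0:ℝ)) 0 := by
    have h0 : Tendsto F (𝓝[>] (0:ℝ)) (𝓝 c0) := ((body_at0 a l ha hl).congr' hFbody)
    rw [ContinuousWithinAt, hF0, ← Set.Ioi_insert, nhdsWithin_insert, tendsto_sup]
    exact ⟨by simpa [hF0] using tendsto_pure_nhds F 0, h0⟩
  have hderiv : ∀ x ∈ Ioi (0:ℝ), HasDerivAt F (g x) x := by
    intro x hx
    have hx' : (0:ℝ) < x := hx
    apply (body_deriv a l ha hl hx').congr_of_eventuallyEq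
    filter_upwards [lt_mem_nhds hx'] with y hy
    simp [hFdef, not_le.2 hy]
  have hpos : ∀ x ∈ Ioi (0:ℝ), 0 ≤ g x := by
    intro x hx
    have hx' : (0:ℝ) < x := hx
    rw [hgdef]
    positivity
  have htop : Tendsto F atTop (𝓝 (Au a l * (Real.sqrt π/2) + Bv a l * (Real.sqrt π/2))) := by
    apply (body_atTop a l ha hl).congr'
    filter_upwards [eventually_gt_atTop (0:ℝ)] with x hx
    simp [hFdef, not_le.2 hx]
  have key : ∫ x in Ioi (0:ℝ), g x
      = (Au a l * (Real.sqrt π/2) + Bv a l * (Real.sqrt π/2)) - F 0 :=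
    integral_Ioi_of_hasDerivAt_of_nonneg hcont hderiv hpos htop
  have keyInt : IntegrableOn g (Ioi (0:ℝ)) :=
    integrableOn_Ioi_deriv_of_nonneg hcont hderiv hpos htop
  have hpi : (0:ℝ) < Real.sqrt π := Real.sqrt_pos.2 Real.pi_pos
  have hval : ∫ x in Ioi (0:ℝ), g x
      = Real.sqrt l * Real.exp (-a * Real.sqrt l) + (2 / a) * Real.exp (-a * Real.sqrt l) := by
    rw [key, hF0, hc0]
    have : Au a l * (Real.sqrt π/2) + Bv a l * (Real.sqrt π/2)
        - (Au a l * (-(Real.sqrt π/2)) + Bv a l * (Real.sqrt π/2)) = Au a l * Real.sqrt π := by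
      ring
    rw [this, Au, sl]
    rw [div_mul_cancel₀ _ hpi.ne']
    rw [show -(a * Real.sqrt l) = -a * Real.sqrt l by ring]
    field_simp
  set g2 : ℝ → ℝ := fun x => Real.exp (-l * x) *
      |1 / (4 * Real.sqrt Real.pi) * x ^ (-(5 : ℝ) / 2) * Real.exp (-a ^ 2 / (4 * x)) *
        (a ^ 2 - 2 * x)| with hg2def
  have hbound : ∀ x ∈ Ioi (0:ℝ), g2 x ≤ g x := by
    intro x hx
    have hx' : (0:ℝ) < x := hx
    have hc : (0:ℝ) ≤ 1 / (4 * Real.sqrt Real.pi) * x ^ (-(5 : ℝ) / 2)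
        * Real.exp (-a ^ 2 / (4 * x)) := by positivity
    have habs : |1 / (4 * Real.sqrt Real.pi) * x ^ (-(5 : ℝ) / 2) * Real.exp (-a ^ 2 / (4 * x)) *
        (a ^ 2 - 2 * x)| ≤ 1 / (4 * Real.sqrt Real.pi) * x ^ (-(5 : ℝ) / 2)
          * Real.exp (-a ^ 2 / (4 * x)) * (a ^ 2 + 2 * x) := by
      rw [abs_mul, abs_of_nonneg hc]
      apply mul_le_mul_of_nonneg_left _ hc
      rw [abs_le]
      constructor <;> nlinarith
    exact mul_le_mul_of_nonneg_left habs (Real.exp_pos _).le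
  have hg2nonneg : ∀ x, 0 ≤ g2 x := fun x =>
    mul_nonneg (Real.exp_pos _).le (abs_nonneg _)
  have hcontg2 : ContinuousOn g2 (Ioi (0:ℝ)) := by
    intro x hx
    have hx' : (0:ℝ) < x := hx
    apply ContinuousAt.continuousWithinAt
    have h1 : ContinuousAt (fun x : ℝ => x ^ (-(5:ℝ)/2)) x :=
      Real.continuousAt_rpow_const x _ (Or.inl hx'.ne')
    have h2 : ContinuousAt (fun x : ℝ => Real.exp (-a^2/(4*x))) x := by
      apply Real.continuous_exp.continuousAt.comp
      exact continuousAt_const.div ((continuous_const.mul continuous_id).continuousAt)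
        (by positivity)
    have h3 : ContinuousAt (fun x : ℝ => Real.exp (-l * x)) x := by fun_prop
    have h4 : ContinuousAt (fun x : ℝ => a^2 - 2*x) x := by fun_prop
    exact h3.mul ((((continuousAt_const.mul h1).mul h2).mul h4).abs)
  have hmeas : AEStronglyMeasurable g2 (volume.restrict (Ioi (0:ℝ))) :=
    hcontg2.aestronglyMeasurable measurableSet_Ioi
  have hae : ∀ᵐ x ∂(volume.restrict (Ioi (0:ℝ))), ‖g2 x‖ ≤ ‖g x‖ := by
    rw [ae_restrict_iff' measurableSet_Ioi]
    filter_upwards with x hx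
    rw [Real.norm_eq_abs, Real.norm_eq_abs, abs_of_nonneg (hg2nonneg x),
      abs_of_nonneg (hpos x hx)]
    exact hbound x hx
  have hg2int : IntegrableOn g2 (Ioi (0:ℝ)) :=
    MeasureTheory.Integrable.mono keyInt hmeas hae
  refine ⟨hval, hg2int, ?_⟩
  calc ∫ x in Ioi (0:ℝ), g2 x ≤ ∫ x in Ioi (0:ℝ), g x :=
        setIntegral_mono_on hg2int keyInt measurableSet_Ioi hbound
    _ = _ := hval
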